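/- Let R₁₂₁₂, R₁₃₁₃, R₂₃₂₃, R₁₂₁₃, R₁₂₂₃, R₁₃₂₃ : ℝ³ → ℝ be twice continuously differentiable prescribed functions. If there exist three-times continuously differentiable functions L_{abc} : ℝ³ → ℝ with L_{abc} = −L_{bac} such that F_{abcd} = R_{abcd} on all of ℝ³ for each of the six index combinations (abcd) ∈ {1212, 1313, 2323, 1213, 1223, 1323}, where F_{abcd} := ∂_d L_{abc} − ∂_c L_{abd} + ∂_b L_{cda} − ∂_a L_{cdb}, then the prescribed functions necessarily satisfy the integrability condition ∂₃∂₃R₁₂₁₂ + ∂₂∂₂R₁₃₁₃ + ∂₁∂₁R₂₃₂₃ − 2∂₁∂₂R₁₃₂₃ − 2∂₂∂₃R₁₂₁₃ + 2∂₁∂₃R₁₂₂₃ = 0 at every point of ℝ³. -/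

import Mathlib

/-- Partial derivative of `f : ℝ³ → ℝ` with respect to the `i`-th coordinate,
taken as the derivative along the corresponding coordinate line. -/
noncomputable def pd (i : Fin 3) (f : (Fin 3 → ℝ) → ℝ) : (Fin 3 → ℝ) → ℝ :=
  fun x => deriv (fun t => f (Function.update x i t)) (x i)

/-- The flat-space Riemann-Lanczos expression
`F_{abcd} = ∂_d L_{abc} − ∂_c L_{abd} + ∂_b L_{cda} − ∂_a L_{cdb}`. -/
noncomputable def RLF (L : Fin 3 → Fin 3 → Fin 3 → (Fin 3 → ℝ) → ℝ)
    (a b c d : Fin 3) : (Fin 3 → ℝ) → ℝ :=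
  fun x => pd d (L a b c) x - pd c (L a b d) x + pd b (L c d a) x - pd a (L c d b) x

lemma pd_eq_fderiv {f : (Fin 3 → ℝ) → ℝ} {x : Fin 3 → ℝ} (hf : DifferentiableAt ℝ f x)
    (i : Fin 3) : pd i f x = fderiv ℝ f x (Pi.single i 1) := by
  have h3 : Function.update x i (x i) = x := Function.update_eq_self i x
  have h1 : HasDerivAt (fun t => f (Function.update x i t))
      (fderiv ℝ f x (Pi.single i 1)) (x i) := by
    have h2 := hasDerivAt_update x i (x i)
    have hF : HasFDerivAt f (fderiv ℝ f x) (Function.update x i (x i)) := by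
      rw [h3]; exact hf.hasFDerivAt
    exact hF.comp_hasDerivAt (x i) h2
  exact h1.deriv

lemma pd_eq_fderiv' {f : (Fin 3 → ℝ) → ℝ} (hf : Differentiable ℝ f) (i : Fin 3) :
    pd i f = fun x => fderiv ℝ f x (Pi.single i 1) :=
  funext fun x => pd_eq_fderiv (hf x) i

lemma pd_contDiff {n m : WithTop ℕ∞} {f : (Fin 3 → ℝ) → ℝ} (hf : ContDiff ℝ m f)
    (hnm : n + 1 ≤ m) (i : Fin 3) : ContDiff ℝ n (pd i f) := by
  rw [pd_eq_fderiv' (hf.differentiable (zero_lt_one.trans_le (le_trans le_add_self hnm)).ne') i]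
  exact (hf.fderiv_right hnm).clm_apply contDiff_const

lemma pd_pd_eq {f : (Fin 3 → ℝ) → ℝ} (hf : ContDiff ℝ 2 f) (i j : Fin 3) (x : Fin 3 → ℝ) :
    pd i (pd j f) x = fderiv ℝ (fderiv ℝ f) x (Pi.single i 1) (Pi.single j 1) := by
  have hd : Differentiable ℝ f := hf.differentiable two_ne_zero
  rw [pd_eq_fderiv' hd j]
  have hfd : ContDiff ℝ 1 (fderiv ℝ f) := hf.fderiv_right (by norm_num)
  have hdiff : DifferentiableAt ℝ (fun y => fderiv ℝ f y (Pi.single j (1:ℝ))) x :=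
    ((hfd.clm_apply contDiff_const).differentiable one_ne_zero) x
  rw [pd_eq_fderiv hdiff i,
    fderiv_clm_apply (hfd.differentiable one_ne_zero x) (differentiableAt_const _)]
  simp

lemma pd_swap {f : (Fin 3 → ℝ) → ℝ} (hf : ContDiff ℝ 2 f) (i j : Fin 3) (x : Fin 3 → ℝ) :
    pd i (pd j f) x = pd j (pd i f) x := by
  rw [pd_pd_eq hf i j x, pd_pd_eq hf j i x]
  exact (hf.contDiffAt.isSymmSndFDerivAt (by simp)).eq _ _

lemma pd_swap' {f : (Fin 3 → ℝ) → ℝ} (hf : ContDiff ℝ 2 f) (i j : Fin 3) :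
    pd i (pd j f) = pd j (pd i f) :=
  funext fun x => pd_swap hf i j x

/-- Swap the two outermost derivatives of a third derivative of a C³ function. -/
lemma pd3_outer {f : (Fin 3 → ℝ) → ℝ} (hf : ContDiff ℝ 3 f) (i j k : Fin 3) (x : Fin 3 → ℝ) :
    pd i (pd j (pd k f)) x = pd j (pd i (pd k f)) x :=
  pd_swap (pd_contDiff hf (by norm_num) k) i j x

/-- Swap the two innermost derivatives of a third derivative of a C³ function. -/
lemma pd3_inner {f : (Fin 3 → ℝ) → ℝ} (hf : ContDiff ℝ 3 f) (i j k : Fin 3) (x : Fin 3 → ℝ) :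
    pd i (pd j (pd k f)) x = pd i (pd k (pd j f)) x := by
  rw [pd_swap' (hf.of_le (by norm_num)) j k]

lemma pd_comb4 {f g h k : (Fin 3 → ℝ) → ℝ} (hf : Differentiable ℝ f)
    (hg : Differentiable ℝ g) (hh : Differentiable ℝ h) (hk : Differentiable ℝ k) (i : Fin 3) :
    pd i (fun x => f x - g x + h x - k x)
      = fun x => pd i f x - pd i g x + pd i h x - pd i k x := by
  funext x
  rw [pd_eq_fderiv (f := fun x => f x - g x + h x - k x) ((((hf x).sub (hg x)).add (hh x)).sub (hk x)) i,
      pd_eq_fderiv (hf x) i, pd_eq_fderiv (hg x) i, pd_eq_fderiv (hh x) i, pd_eq_fderiv (hk x) i,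
      fderiv_fun_sub (f := fun y => f y - g y + h y) (g := k) (((hf x).sub (hg x)).add (hh x)) (hk x),
      fderiv_fun_add (f := fun y => f y - g y) (g := h) ((hf x).sub (hg x)) (hh x), fderiv_fun_sub (hf x) (hg x)]
  simp

lemma pd2_RLF {L : Fin 3 → Fin 3 → Fin 3 → (Fin 3 → ℝ) → ℝ}
    (hL : ∀ a b c, ContDiff ℝ 3 (L a b c)) (i j a b c d : Fin 3) (x : Fin 3 → ℝ) :
    pd i (pd j (RLF L a b c d)) x =
      pd i (pd j (pd d (L a b c))) x - pd i (pd j (pd c (L a b d))) x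
      + pd i (pd j (pd b (L c d a))) x - pd i (pd j (pd a (L c d b))) x := by
  have h2 : ∀ a b c (e : Fin 3), ContDiff ℝ 2 (pd e (L a b c)) :=
    fun a b c e => pd_contDiff (hL a b c) (by norm_num) e
  have h1 : ∀ a b c (e f : Fin 3), Differentiable ℝ (pd f (pd e (L a b c))) :=
    fun a b c e f => (pd_contDiff (n := 1) (h2 a b c e) (by norm_num) f).differentiable one_ne_zero
  have e1 : pd j (RLF L a b c d)
      = fun x => pd j (pd d (L a b c)) x - pd j (pd c (L a b d)) x
        + pd j (pd b (L c d a)) x - pd j (pd a (L c d b)) x :=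
    pd_comb4 ((h2 a b c d).differentiable two_ne_zero) ((h2 a b d c).differentiable two_ne_zero)
      ((h2 c d a b).differentiable two_ne_zero) ((h2 c d b a).differentiable two_ne_zero) j
  rw [e1, pd_comb4 (h1 a b c d j) (h1 a b d c j) (h1 c d a b j) (h1 c d b a j) i]

/-- If the flat 3-dimensional Riemann-Lanczos problem `F_{abcd} = R_{abcd}` (for the six
independent index combinations 1212, 1313, 2323, 1213, 1223, 1323) has a solution `L` of
class C³ with `L_{abc} = −L_{bac}`, then the prescribed C² functions `R_{abcd}` satisfy
the integrability condition
`∂₃∂₃R₁₂₁₂ + ∂₂∂₂R₁₃₁₃ + ∂₁∂₁R₂₃₂₃ − 2∂₁∂₂R₁₃₂₃ − 2∂₂∂₃R₁₂₁₃ + 2∂₁∂₃R₁₂₂₃ = 0`.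
Index `i ∈ {1,2,3}` of the paper corresponds to `i - 1 : Fin 3`. -/
theorem riemann_lanczos_3d_integrability
    (R1212 R1313 R2323 R1213 R1223 R1323 : (Fin 3 → ℝ) → ℝ)
    (hR1212 : ContDiff ℝ 2 R1212) (hR1313 : ContDiff ℝ 2 R1313)
    (hR2323 : ContDiff ℝ 2 R2323) (hR1213 : ContDiff ℝ 2 R1213)
    (hR1223 : ContDiff ℝ 2 R1223) (hR1323 : ContDiff ℝ 2 R1323)
    (h : ∃ L : Fin 3 → Fin 3 → Fin 3 → (Fin 3 → ℝ) → ℝ,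
      (∀ a b c, ContDiff ℝ 3 (L a b c)) ∧
      (∀ a b c x, L a b c x = - L b a c x) ∧
      (∀ x, RLF L 0 1 0 1 x = R1212 x) ∧
      (∀ x, RLF L 0 2 0 2 x = R1313 x) ∧
      (∀ x, RLF L 1 2 1 2 x = R2323 x) ∧
      (∀ x, RLF L 0 1 0 2 x = R1213 x) ∧
      (∀ x, RLF L 0 1 1 2 x = R1223 x) ∧
      (∀ x, RLF L 0 2 1 2 x = R1323 x)) :
    ∀ x : Fin 3 → ℝ,
      pd 2 (pd 2 R1212) x + pd 1 (pd 1 R1313) x + pd 0 (pd 0 R2323) x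
        - 2 * pd 0 (pd 1 R1323) x - 2 * pd 1 (pd 2 R1213) x
        + 2 * pd 0 (pd 2 R1223) x = 0 := by
  obtain ⟨L, hL3, -, h1, h2, h3, h4, h5, h6⟩ := h
  have e1 : R1212 = RLF L 0 1 0 1 := funext fun x => (h1 x).symm
  have e2 : R1313 = RLF L 0 2 0 2 := funext fun x => (h2 x).symm
  have e3 : R2323 = RLF L 1 2 1 2 := funext fun x => (h3 x).symm
  have e4 : R1213 = RLF L 0 1 0 2 := funext fun x => (h4 x).symm
  have e5 : R1223 = RLF L 0 1 1 2 := funext fun x => (h5 x).symm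
  have e6 : R1323 = RLF L 0 2 1 2 := funext fun x => (h6 x).symm
  subst e1 e2 e3 e4 e5 e6
  intro x
  rw [pd2_RLF hL3 2 2 0 1 0 1 x, pd2_RLF hL3 1 1 0 2 0 2 x, pd2_RLF hL3 0 0 1 2 1 2 x,
      pd2_RLF hL3 0 1 0 2 1 2 x, pd2_RLF hL3 1 2 0 1 0 2 x, pd2_RLF hL3 0 2 0 1 1 2 x]
  have r1 : pd 2 (pd 2 (pd 1 (L 0 1 0))) x = pd 1 (pd 2 (pd 2 (L 0 1 0))) x :=
    (pd3_inner (hL3 0 1 0) 2 2 1 x).trans (pd3_outer (hL3 0 1 0) 2 1 2 x)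
  have r2 : pd 2 (pd 2 (pd 0 (L 0 1 1))) x = pd 0 (pd 2 (pd 2 (L 0 1 1))) x :=
    (pd3_inner (hL3 0 1 1) 2 2 0 x).trans (pd3_outer (hL3 0 1 1) 2 0 2 x)
  have r3 : pd 1 (pd 1 (pd 2 (L 0 2 0))) x = pd 1 (pd 2 (pd 1 (L 0 2 0))) x :=
    pd3_inner (hL3 0 2 0) 1 1 2 x
  have r4 : pd 1 (pd 1 (pd 0 (L 0 2 2))) x = pd 0 (pd 1 (pd 1 (L 0 2 2))) x :=
    (pd3_inner (hL3 0 2 2) 1 1 0 x).trans (pd3_outer (hL3 0 2 2) 1 0 1 x)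
  have r5 : pd 0 (pd 0 (pd 2 (L 1 2 1))) x = pd 0 (pd 2 (pd 0 (L 1 2 1))) x :=
    pd3_inner (hL3 1 2 1) 0 0 2 x
  have r6 : pd 0 (pd 0 (pd 1 (L 1 2 2))) x = pd 0 (pd 1 (pd 0 (L 1 2 2))) x :=
    pd3_inner (hL3 1 2 2) 0 0 1 x
  have r7 : pd 1 (pd 2 (pd 0 (L 0 2 1))) x = pd 0 (pd 1 (pd 2 (L 0 2 1))) x :=
    (pd3_inner (hL3 0 2 1) 1 2 0 x).trans (pd3_outer (hL3 0 2 1) 1 0 2 x)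
  have r8 : pd 0 (pd 2 (pd 1 (L 1 2 0))) x = pd 0 (pd 1 (pd 2 (L 1 2 0))) x :=
    pd3_inner (hL3 1 2 0) 0 2 1 x
  have r9a : pd 1 (pd 2 (pd 0 (L 0 1 2))) x = pd 0 (pd 1 (pd 2 (L 0 1 2))) x :=
    (pd3_inner (hL3 0 1 2) 1 2 0 x).trans (pd3_outer (hL3 0 1 2) 1 0 2 x)
  have r9b : pd 0 (pd 2 (pd 1 (L 0 1 2))) x = pd 0 (pd 1 (pd 2 (L 0 1 2))) x :=
    pd3_inner (hL3 0 1 2) 0 2 1 x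
  rw [r1, r2, r3, r4, r5, r6, r7, r8, r9a, r9b]
  ring
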